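/- Let h_i^e denote the i-th earliest transiting occurrence of an N-node serial episode (ordered lexicographically). Then for i < j, h_i^e(v_k) ≤ h_j^e(v_k) for all k = 1,...,N; moreover h_i^e(v_1) < h_j^e(v_1). -/

import Mathlib

variable {A : Type}

/-- An occurrence of the (N+1)-node serial episode `α` in the event sequence
`E` (of length `n`): a strictly increasing index map matching the event-types. -/
def IsOcc (E : ℕ → A) (n : ℕ) {N : ℕ} (α : Fin (N+1) → A) (h : Fin (N+1) → ℕ) : Prop :=
  StrictMono h ∧ (∀ i, h i < n) ∧ (∀ i, E (h i) = α i)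

/-- Earliest transiting occurrence: each `h i.succ` is the least index after
`h i.castSucc` carrying event-type `α i.succ`. -/
def IsET (E : ℕ → A) (n : ℕ) {N : ℕ} (α : Fin (N+1) → A) (h : Fin (N+1) → ℕ) : Prop :=
  IsOcc E n α h ∧ ∀ (i : Fin N) (j : ℕ), h i.castSucc < j → E j = α i.succ → h i.succ ≤ j

/-- Lexicographic order on occurrences. -/
def OccLex {N : ℕ} (h1 h2 : Fin (N+1) → ℕ) : Prop :=
  ∃ i, (∀ k < i, h1 k = h2 k) ∧ h1 i < h2 i

/-- The window `[a, b]` contains an occurrence of `α`. -/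
def WindowHasOcc (E : ℕ → A) (n : ℕ) {N : ℕ} (α : Fin (N+1) → A) (a b : ℕ) : Prop :=
  ∃ h, IsOcc E n α h ∧ a ≤ h 0 ∧ h (Fin.last N) ≤ b

/-- `[a, b]` is a minimal window of `α`: it contains an occurrence and no
proper subwindow contains one. -/
def IsMinWindow (E : ℕ → A) (n : ℕ) {N : ℕ} (α : Fin (N+1) → A) (a b : ℕ) : Prop :=
  WindowHasOcc E n α a b ∧
    ∀ c d, a ≤ c → d ≤ b → (a < c ∨ d < b) → ¬ WindowHasOcc E n α c d

/-- A minimal occurrence: its window is a minimal window. -/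
def IsMinOcc (E : ℕ → A) (n : ℕ) {N : ℕ} (α : Fin (N+1) → A) (h : Fin (N+1) → ℕ) : Prop :=
  IsOcc E n α h ∧ IsMinWindow E n α (h 0) (h (Fin.last N))

/-- `h'` is the earliest transiting occurrence immediately following `h`
in the lexicographic enumeration of earliest transiting occurrences. -/
def NextET (E : ℕ → A) (n : ℕ) {N : ℕ} (α : Fin (N+1) → A) (h h' : Fin (N+1) → ℕ) : Prop :=
  IsET E n α h ∧ IsET E n α h' ∧ OccLex h h' ∧
    ¬ ∃ g, IsET E n α g ∧ OccLex h g ∧ OccLex g h'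

/-- `h1 <⋆ h2` are non-interleaved: `h2 (v_j) ≥ h1 (v_{j+1})` for all `j < N`. -/
def NonInterleaved {N : ℕ} (h1 h2 : Fin (N+1) → ℕ) : Prop :=
  ∀ i : Fin N, h1 i.succ ≤ h2 i.castSucc

/-- Non-overlapped occurrences: one ends strictly before the other begins. -/
def NonOverlapped {N : ℕ} (h1 h2 : Fin (N+1) → ℕ) : Prop :=
  h1 (Fin.last N) < h2 0 ∨ h2 (Fin.last N) < h1 0

theorem stmt1 (E : ℕ → A) (n : ℕ) {N : ℕ} (α : Fin (N+1) → A)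
    (h h' : Fin (N+1) → ℕ) (hET : IsET E n α h) (hET' : IsET E n α h')
    (hlex : OccLex h h') : (∀ k, h k ≤ h' k) ∧ h 0 < h' 0 := by
  obtain ⟨i, hpre, hi⟩ := hlex
  have h0 : h 0 < h' 0 := by
    induction i using Fin.cases with
    | zero => exact hi
    | succ j =>
      exfalso
      have heq : h j.castSucc = h' j.castSucc := hpre _ (Fin.castSucc_lt_succ (i := j))
      have hle : h' j.succ ≤ h j.succ := by
        apply hET'.2 j
        · rw [← heq]; exact hET.1.1 (Fin.castSucc_lt_succ (i := j))
        · exact hET.1.2.2 j.succ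
      exact absurd hi (not_lt.mpr hle)
  refine ⟨?_, h0⟩
  intro k
  induction k using Fin.induction with
  | zero => exact h0.le
  | succ j ih =>
    apply hET.2 j
    · exact lt_of_le_of_lt ih (hET'.1.1 (Fin.castSucc_lt_succ (i := j)))
    · exact hET'.1.2.2 j.succ
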